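/- arXiv:1502.00151 — 5 statements merged into one kernel-verified Lean document; each statement's English description precedes it below -/
import Mathlib

section
/- For every nontrivial connected graph G of order n ≥ 5 and every integer k with 2 ≤ k ≤ n, we have 0 ≤ rvx_k(G) ≤ n − 2. -/
/-- A vertex-coloring `c` makes `G` vertex-rainbow `k`-tree-connected using at most `m`
colors (on Steiner vertices): every `k`-subset `S` of vertices admits a connected subgraph
(equivalently, a Steiner tree) containing `S` whose vertices outside `S` receive pairwise
distinct colors, all drawn from a palette of `m` colors. -/
def hasRvxColoring {V : Type*} (G : SimpleGraph V) (k m : ℕ) : Prop :=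
  ∃ c : V → ℕ, ∀ S : Finset V, S.card = k →
    ∃ T : G.Subgraph, T.Connected ∧ ↑S ⊆ T.verts ∧
      Set.InjOn c (T.verts \ ↑S) ∧ ∀ v ∈ T.verts \ (↑S : Set V), c v < m

/-- The `k`-vertex-rainbow index `rvx_k(G)`. -/
noncomputable def rvx {V : Type*} (G : SimpleGraph V) (k : ℕ) : ℕ :=
  sInf {m | hasRvxColoring G k m}

/-- The Steiner distance of a vertex set `S`: the minimum number of edges of a connected
subgraph of `G` containing `S`. -/
noncomputable def steinerDist {V : Type*} (G : SimpleGraph V) (S : Set V) : ℕ :=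
  sInf {m | ∃ T : G.Subgraph, T.Connected ∧ S ⊆ T.verts ∧ T.edgeSet.ncard = m}

/-- The Steiner `k`-diameter of `G`. -/
noncomputable def sdiam {V : Type*} [Fintype V] [DecidableEq V]
    (G : SimpleGraph V) (k : ℕ) : ℕ :=
  (Finset.univ.powersetCard k).sup fun S : Finset V => steinerDist G (S : Set V)

/-- `t(n,k,ℓ)`: the minimal number of edges of a connected graph of order `n`
with `rvx_k(G) ≤ ℓ`. -/
noncomputable def minSize (n k l : ℕ) : ℕ :=
  sInf {m | ∃ G : SimpleGraph (Fin n), G.Connected ∧ rvx G k ≤ l ∧ G.edgeSet.ncard = m}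

section AuxRvx
open SimpleGraph

lemma exists_walk_avoid' {V : Type*} {G : SimpleGraph V} {r u : V}
    (hmax : ∀ y, G.dist r y ≤ G.dist r u) (hr : ∀ y, G.Reachable r y)
    {x : V} (hx : x ≠ u) : ∃ p : G.Walk r x, u ∉ p.support := by
  classical
  obtain ⟨p, hp⟩ := (hr x).exists_walk_length_eq_dist
  refine ⟨p, fun hu => ?_⟩
  have h1 : G.dist r u ≤ (p.takeUntil u hu).length := SimpleGraph.dist_le _
  have h2 := congrArg SimpleGraph.Walk.length (p.take_spec hu)
  rw [SimpleGraph.Walk.length_append] at h2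
  have h3 : (p.dropUntil u hu).length ≠ 0 := fun h0 =>
    hx (SimpleGraph.Walk.eq_of_length_eq_zero h0).symm
  have h4 : G.dist r x ≤ G.dist r u := hmax x
  omega

lemma reachable_induce' {V : Type*} {G : SimpleGraph V} {s : Set V} {a b : V}
    (p : G.Walk a b) (hp : ∀ x ∈ p.support, x ∈ s) (ha : a ∈ s) (hb : b ∈ s) :
    (G.induce s).Reachable ⟨a, ha⟩ ⟨b, hb⟩ := by
  induction p with
  | nil => exact Reachable.refl _
  | @cons a c b h q ih =>
      have hsup : ∀ x ∈ q.support, x ∈ s := fun x hx => hp x (by simp [hx])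
      have hc : c ∈ s := hsup c q.start_mem_support
      have h1 : (G.induce s).Adj ⟨a, ha⟩ ⟨c, hc⟩ := h
      exact (h1.reachable).trans (ih hsup hc hb)

/-- Key structural lemma: two vertices `u ≠ w` and a hub `y ∉ {u,w}` such that every
vertex is reachable from `y` by a walk whose support only meets `{u,w}` at the endpoint. -/
lemma exists_two_removable {V : Type*} [Fintype V] (G : SimpleGraph V) (hconn : G.Connected)
    (h5 : 5 ≤ Fintype.card V) :
    ∃ u w y : V, u ≠ w ∧ y ≠ u ∧ y ≠ w ∧
      ∀ x : V, ∃ p : G.Walk y x, ∀ a ∈ p.support, a = x ∨ (a ≠ u ∧ a ≠ w) := by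
  classical
  obtain ⟨v⟩ := hconn.nonempty
  obtain ⟨u, -, hu⟩ := Finset.exists_max_image Finset.univ (G.dist v) ⟨v, Finset.mem_univ v⟩
  have hmaxu : ∀ z, G.dist v z ≤ G.dist v u := fun z => hu z (Finset.mem_univ z)
  -- a neighbor y of u
  obtain ⟨x0, hx0⟩ := Fintype.exists_ne_of_one_lt_card (by omega) u
  obtain ⟨y, hy⟩ : ∃ y, G.Adj u y := by
    obtain ⟨p⟩ := hconn u x0
    cases p with
    | nil => exact absurd rfl hx0
    | cons h q => exact ⟨_, h⟩
  have hyu : y ≠ u := hy.ne'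
  -- walks from v avoiding u
  have q1 : ∀ x : V, x ≠ u → ∃ p : G.Walk v x, u ∉ p.support :=
    fun x hx => exists_walk_avoid' hmaxu (hconn v) hx
  -- the induced graph on {u}ᶜ
  set s : Set V := {u}ᶜ with hs
  have hys : y ∈ s := hyu
  have Hreach : ∀ a b : ↥s, (G.induce s).Reachable a b := by
    rintro ⟨a, ha⟩ ⟨b, hb⟩
    obtain ⟨pa, hpa⟩ := q1 a ha
    obtain ⟨pb, hpb⟩ := q1 b hb
    refine reachable_induce' (pa.reverse.append pb) ?_ ha hb
    intro x hx
    rw [SimpleGraph.Walk.mem_support_append_iff] at hx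
    rcases hx with hx | hx
    · rw [SimpleGraph.Walk.support_reverse, List.mem_reverse] at hx
      exact fun h => hpa (h ▸ hx)
    · exact fun h => hpb (h ▸ hx)
  haveI : Fintype ↥s := Fintype.ofFinite _
  -- a vertex z distinct from u and y
  obtain ⟨z, hzu, hzy⟩ : ∃ z : V, z ≠ u ∧ z ≠ y := by
    by_contra h
    push_neg at h
    have hsub : (Finset.univ : Finset V) ⊆ {u, y} := by
      intro z _
      rcases eq_or_ne z u with rfl | hz
      · simp
      · simp [h z hz]
    have := Finset.card_le_card hsub
    have h2 : ({u, y} : Finset V).card ≤ 2 := Finset.card_insert_le _ _ |>.trans (by simp)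
    simp only [Finset.card_univ] at this
    omega
  set y' : ↥s := ⟨y, hys⟩ with hy'
  -- w : farthest from y' in induce s
  obtain ⟨w', -, hw'⟩ := Finset.exists_max_image Finset.univ ((G.induce s).dist y')
    ⟨y', Finset.mem_univ _⟩
  have hmaxw : ∀ b, (G.induce s).dist y' b ≤ (G.induce s).dist y' w' :=
    fun b => hw' b (Finset.mem_univ b)
  have hwu : (w' : V) ≠ u := w'.2
  have hwy : (w' : V) ≠ y := by
    intro h
    have hz' : (⟨z, hzu⟩ : ↥s) ≠ y' := by
      intro hzz
      exact hzy (congrArg Subtype.val hzz)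
    have hd : 0 < (G.induce s).dist y' ⟨z, hzu⟩ :=
      (Hreach y' _).pos_dist_of_ne (fun e => hz' e.symm)
    have hww : w' = y' := Subtype.ext h
    have := hmaxw ⟨z, hzu⟩
    rw [hww, SimpleGraph.dist_self] at this
    omega
  refine ⟨u, w', y, fun h => hwu h.symm, hyu, fun h => hwy h.symm, ?_⟩
  intro x
  rcases eq_or_ne x u with rfl | hxu
  · refine ⟨SimpleGraph.Walk.cons hy.symm SimpleGraph.Walk.nil, ?_⟩
    intro a ha
    simp only [SimpleGraph.Walk.support_cons, SimpleGraph.Walk.support_nil,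
      List.mem_cons, List.mem_singleton] at ha
    rcases ha with rfl | ha
    · exact Or.inr ⟨hyu, hwy.symm⟩
    · rcases ha with rfl | ha
      · exact Or.inl rfl
      · exact absurd ha List.not_mem_nil
  · -- x ≠ u : use a walk in the induced graph
    have hxs : x ∈ s := hxu
    have hkey : ∃ p' : (G.induce s).Walk y' ⟨x, hxs⟩,
        (⟨x, hxs⟩ : ↥s) = w' ∨ w' ∉ p'.support := by
      rcases eq_or_ne (⟨x, hxs⟩ : ↥s) w' with he | hne
      · obtain ⟨p'⟩ := Hreach y' ⟨x, hxs⟩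
        exact ⟨p', Or.inl he⟩
      · obtain ⟨p', hp'⟩ := exists_walk_avoid' hmaxw (fun b => Hreach y' b) hne
        exact ⟨p', Or.inr hp'⟩
    obtain ⟨p', hp'⟩ := hkey
    refine ⟨p'.map (SimpleGraph.Embedding.induce s).toHom, ?_⟩
    intro a ha
    have ha : a ∈ (p'.support.map (SimpleGraph.Embedding.induce (G := G) s).toHom) := by
      rw [← SimpleGraph.Walk.support_map]; exact ha
    rw [List.mem_map] at ha
    obtain ⟨b, hb, rfl⟩ := ha
    have hbu : (b : V) ≠ u := b.2
    rcases hp' with he | hnmem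
    · rcases eq_or_ne b w' with rfl | hbw
      · exact Or.inl (congrArg Subtype.val he.symm)
      · exact Or.inr ⟨hbu, fun h => hbw (Subtype.ext h)⟩
    · refine Or.inr ⟨hbu, fun h => ?_⟩
      exact hnmem ((Subtype.ext h : b = w') ▸ hb)


end AuxRvx

/-- for a connected graph of order `n ≥ 5` and `2 ≤ k ≤ n`,
`0 ≤ rvx_k(G) ≤ n - 2`. -/
theorem rvx_le_card_sub_two {V : Type*} [Fintype V] (G : SimpleGraph V) (hconn : G.Connected)
    (n : ℕ) (hn : n = Fintype.card V) (hn5 : 5 ≤ n)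
    (k : ℕ) (hk : 2 ≤ k) (hk' : k ≤ n) :
    rvx G k ≤ n - 2 := by
  classical
  have hcard : 5 ≤ Fintype.card V := hn ▸ hn5
  obtain ⟨u, w, y, huw, hyu, hyw, Q⟩ := exists_two_removable G hconn hcard
  choose q hq using Q
  -- coloring
  have e : V ≃ Fin n := (Fintype.equivFin V).trans (finCongr hn.symm)
  set a1 : Fin n := ⟨n-1, by omega⟩ with ha1
  set a2 : Fin n := ⟨n-2, by omega⟩ with ha2
  set e2 : V ≃ Fin n := e.trans (Equiv.swap (e u) a1) with he2
  set e3 : V ≃ Fin n := e2.trans (Equiv.swap (e2 w) a2) with he3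
  have h1 : e2 u = a1 := by simp [he2, Equiv.swap_apply_left]
  have he3u : e3 u = a1 := by
    have h2 : e2 w ≠ a1 := by
      rw [← h1]; exact fun h => huw (e2.injective h).symm
    have h3 : (a1 : Fin n) ≠ a2 := by
      simp only [ha1, ha2, ne_eq, Fin.mk.injEq]; omega
    rw [he3, Equiv.trans_apply, h1, Equiv.swap_apply_of_ne_of_ne h2.symm h3]
  have he3w : e3 w = a2 := by rw [he3, Equiv.trans_apply, Equiv.swap_apply_left]
  have hlt : ∀ x : V, x ≠ u → x ≠ w → (e3 x).val < n - 2 := by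
    intro x hxu hxw
    have h1 : e3 x ≠ a1 := fun h => hxu (e3.injective (h.trans he3u.symm))
    have h2 : e3 x ≠ a2 := fun h => hxw (e3.injective (h.trans he3w.symm))
    have h3 : (e3 x).val < n := (e3 x).2
    have h4 : (e3 x).val ≠ n - 1 := fun h => h1 (Fin.ext h)
    have h5 : (e3 x).val ≠ n - 2 := fun h => h2 (Fin.ext h)
    omega
  apply Nat.sInf_le
  show hasRvxColoring G k (n - 2)
  refine ⟨fun x => (e3 x).val, ?_⟩
  intro S hS
  obtain ⟨s₀, hs₀⟩ := Finset.card_pos.mp (show 0 < S.card by omega)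
  set g : V → G.Walk s₀ s₀ := fun t =>
    (((q s₀).reverse.append (q t)).append ((q s₀).reverse.append (q t)).reverse) with hg
  have hgmem : ∀ t, t ∈ (g t).support := by
    intro t
    rw [hg]
    rw [SimpleGraph.Walk.mem_support_append_iff]
    left
    rw [SimpleGraph.Walk.mem_support_append_iff]
    right
    exact (q t).end_mem_support
  have hgsub : ∀ t a, a ∈ (g t).support → a = s₀ ∨ a = t ∨ (a ≠ u ∧ a ≠ w) := by
    intro t a ha
    rw [hg, SimpleGraph.Walk.mem_support_append_iff] at ha
    have ha' : a ∈ ((q s₀).reverse.append (q t)).support := by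
      rcases ha with ha | ha
      · exact ha
      · rwa [SimpleGraph.Walk.support_reverse, List.mem_reverse] at ha
    rw [SimpleGraph.Walk.mem_support_append_iff] at ha'
    rcases ha' with ha' | ha'
    · rw [SimpleGraph.Walk.support_reverse, List.mem_reverse] at ha'
      rcases hq s₀ a ha' with h | h
      · exact Or.inl h
      · exact Or.inr (Or.inr h)
    · rcases hq t a ha' with h | h
      · exact Or.inr (Or.inl h)
      · exact Or.inr (Or.inr h)
  have hfold : ∀ l : List V, (∀ t ∈ l, t ∈ S) →
      (∀ a ∈ (l.foldr (fun t acc => (g t).append acc)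
          (SimpleGraph.Walk.nil : G.Walk s₀ s₀)).support, a ∈ S ∨ (a ≠ u ∧ a ≠ w)) ∧
      (∀ t ∈ l, t ∈ (l.foldr (fun t acc => (g t).append acc)
          (SimpleGraph.Walk.nil : G.Walk s₀ s₀)).support) := by
    intro l
    induction l with
    | nil =>
        intro _
        constructor
        · intro a ha
          simp only [List.foldr_nil, SimpleGraph.Walk.support_nil, List.mem_singleton] at ha
          subst ha
          exact Or.inl hs₀
        · intro t ht
          exact absurd ht List.not_mem_nil
    | cons t l ih =>
        intro hl
        have ihl := ih (fun t' ht' => hl t' (List.mem_cons_of_mem _ ht'))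
        constructor
        · intro a ha
          rw [List.foldr_cons, SimpleGraph.Walk.mem_support_append_iff] at ha
          rcases ha with ha | ha
          · rcases hgsub t a ha with rfl | h
            · exact Or.inl hs₀
            · rcases h with rfl | h
              · exact Or.inl (hl a List.mem_cons_self)
              · exact Or.inr h
          · exact ihl.1 a ha
        · intro t' ht'
          rw [List.foldr_cons, SimpleGraph.Walk.mem_support_append_iff]
          rcases List.mem_cons.mp ht' with rfl | h
          · exact Or.inl (hgmem t')
          · exact Or.inr (ihl.2 t' h)
  set W : G.Walk s₀ s₀ := S.toList.foldr (fun t acc => (g t).append acc)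
    (SimpleGraph.Walk.nil : G.Walk s₀ s₀) with hWdef
  have hWs := hfold S.toList (fun t ht => Finset.mem_toList.mp ht)
  have hTS : W.toSubgraph.verts \ ↑S ⊆ {x : V | x ≠ u ∧ x ≠ w} := by
    rintro x ⟨hx1, hx2⟩
    rcases hWs.1 x ((SimpleGraph.Walk.mem_verts_toSubgraph W).mp hx1) with h | h
    · exact absurd h hx2
    · exact h
  refine ⟨W.toSubgraph, W.toSubgraph_connected, ?_, ?_, ?_⟩
  · intro x hx
    exact (SimpleGraph.Walk.mem_verts_toSubgraph W).mpr (hWs.2 x (Finset.mem_toList.mpr hx))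
  · intro x1 hx1 x2 hx2 hc
    exact e3.injective (Fin.ext hc)
  · intro x hx
    exact hlt x (hTS hx).1 (hTS hx).2
end

section
/- Let G be a connected graph of order n ≥ 3. Then the following are equivalent: (1) rvx_3(G) = 0; (2) sdiam_3(G) = 2; (3) the minimum degree of G satisfies n−2 ≤ δ(G) ≤ n−1. -/
section Aux

open SimpleGraph

set_option linter.unusedSectionVars false

variable {V : Type*}

private lemma exists_adj_aux {G : SimpleGraph V} {T : G.Subgraph} (hT : T.Connected)
    {a b : V} (ha : a ∈ T.verts) (hb : b ∈ T.verts) (hab : a ≠ b) :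
    ∃ x, T.Adj a x := by
  obtain ⟨p⟩ := hT.coe.preconnected ⟨a, ha⟩ ⟨b, hb⟩
  have hnil : ¬ p.Nil := SimpleGraph.Walk.not_nil_of_ne
    (by simp [Subtype.ext_iff, hab])
  obtain ⟨u, h, q, rfl⟩ := SimpleGraph.Walk.not_nil_iff.mp hnil
  exact ⟨u.val, h⟩

private lemma walk_closed {G : SimpleGraph V} {T : G.Subgraph} {A : Set V}
    (hA : ∀ a b : V, T.Adj a b → a ∈ A → b ∈ A) :
    ∀ {a b : T.verts} (_ : T.coe.Walk a b), (a : V) ∈ A → (b : V) ∈ A := by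
  intro a b p
  induction p with
  | nil => exact id
  | cons h p ih => exact fun ha => ih (hA _ _ h ha)

private lemma center_of_Q {G : SimpleGraph V}
    (hQ : ∀ u v w : V, u ≠ v → u ≠ w → v ≠ w → G.Adj u v ∨ G.Adj u w)
    {u v w : V} (huv : u ≠ v) (huw : u ≠ w) (hvw : v ≠ w) :
    ∃ x y z : V, ({u, v, w} : Set V) = {x, y, z} ∧ G.Adj x y ∧ G.Adj x z ∧ y ≠ z := by
  rcases hQ u v w huv huw hvw with h1 | h1
  · rcases hQ w u v huw.symm hvw.symm huv with h3 | h3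
    · exact ⟨u, v, w, rfl, h1, h3.symm, hvw⟩
    · refine ⟨v, u, w, ?_, h1.symm, h3.symm, huw⟩
      ext a; simp; tauto
  · rcases hQ v u w huv.symm hvw huw with h2 | h2
    · exact ⟨u, v, w, rfl, h2.symm, h1, hvw⟩
    · refine ⟨w, u, v, ?_, h1.symm, h2.symm, huv⟩
      ext a; simp; tauto

private lemma build_T {G : SimpleGraph V} {x y z : V} (hxy : G.Adj x y) (hxz : G.Adj x z) :
    ∃ T : G.Subgraph, T.Connected ∧ T.verts = {x, y, z} ∧ T.edgeSet = {s(x, y), s(x, z)} := by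
  refine ⟨G.subgraphOfAdj hxy ⊔ G.subgraphOfAdj hxz, ?_, ?_, ?_⟩
  · refine Subgraph.connected_sup (Subgraph.subgraphOfAdj_connected hxy).preconnected
      (Subgraph.subgraphOfAdj_connected hxz).preconnected ⟨x, ?_⟩
    simp
  · rw [Subgraph.verts_sup, subgraphOfAdj_verts, subgraphOfAdj_verts]
    ext a; simp; tauto
  · rw [Subgraph.edgeSet_sup, edgeSet_subgraphOfAdj, edgeSet_subgraphOfAdj]
    simp [Set.singleton_union, Set.pair_comm]

private lemma two_le_ncard_edges [Fintype V] [DecidableEq V] {G : SimpleGraph V}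
    {T : G.Subgraph} (hT : T.Connected) {u v w : V}
    (hu : u ∈ T.verts) (hv : v ∈ T.verts) (hw : w ∈ T.verts)
    (huv : u ≠ v) (huw : u ≠ w) (hvw : v ≠ w) : 2 ≤ T.edgeSet.ncard := by
  obtain ⟨x, hux⟩ := exists_adj_aux hT hu hv huv
  obtain ⟨y, hy, hyu, hyx⟩ : ∃ y, y ∈ T.verts ∧ y ≠ u ∧ y ≠ x := by
    by_cases h : v = x
    · exact ⟨w, hw, huw.symm, by rw [← h]; exact hvw.symm⟩
    · exact ⟨v, hv, huv.symm, h⟩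
  obtain ⟨z, hyz⟩ := exists_adj_aux hT hy hu hyu
  have h1 : s(u, x) ∈ T.edgeSet := hux
  have h2 : s(y, z) ∈ T.edgeSet := hyz
  have hne : s(u, x) ≠ s(y, z) := by
    intro h
    rw [Sym2.eq_iff] at h
    rcases h with ⟨ha, -⟩ | ⟨ha, hb⟩
    · exact hyu ha.symm
    · exact hyx hb.symm
  calc 2 = ({s(u, x), s(y, z)} : Set (Sym2 V)).ncard := (Set.ncard_pair hne).symm
  _ ≤ T.edgeSet.ncard := Set.ncard_le_ncard (by
      intro e he; rcases he with rfl | he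
      · exact h1
      · rcases he with rfl; exact h2) (Set.toFinite _)

private lemma top_connected {G : SimpleGraph V} (hconn : G.Connected) :
    (⊤ : G.Subgraph).Connected :=
  Subgraph.connected_iff'.mpr (Subgraph.topIso.connected_iff.mpr hconn)

private lemma rvx_set_nonempty [Fintype V] [DecidableEq V] {G : SimpleGraph V}
    (hconn : G.Connected) : hasRvxColoring G 3 (Fintype.card V) := by
  refine ⟨fun v => ((Fintype.equivFin V) v : ℕ), fun S hS => ?_⟩
  refine ⟨⊤, top_connected hconn, by simp, ?_, ?_⟩
  · intro a _ b _ h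
    exact (Fintype.equivFin V).injective (Fin.val_injective h)
  · intro v _
    exact ((Fintype.equivFin V) v).isLt

section
variable [Fintype V] [DecidableEq V] {G : SimpleGraph V}

private lemma Q_imp_rvx
    (hQ : ∀ u v w : V, u ≠ v → u ≠ w → v ≠ w → G.Adj u v ∨ G.Adj u w) :
    rvx G 3 = 0 := by
  have h0 : hasRvxColoring G 3 0 := by
    refine ⟨fun _ => 0, fun S hS => ?_⟩
    obtain ⟨u, v, w, huv, huw, hvw, rfl⟩ := Finset.card_eq_three.mp hS
    obtain ⟨x, y, z, hset, hxy, hxz, hyz⟩ := center_of_Q hQ huv huw hvw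
    obtain ⟨T, hTc, hTv, hTe⟩ := build_T hxy hxz
    have hcoe : (↑({u, v, w} : Finset V) : Set V) = T.verts := by
      rw [hTv, ← hset]; simp
    have hdiff : T.verts \ (↑({u, v, w} : Finset V) : Set V) = ∅ := by
      rw [hcoe]; simp
    refine ⟨T, hTc, hcoe.le, by rw [hdiff]; exact fun a ha => absurd ha (by simp),
      by rw [hdiff]; intro a ha; exact absurd ha (by simp)⟩
  exact Nat.sInf_eq_zero.mpr (Or.inl h0)

private lemma rvx_imp_Q (hconn : G.Connected) (hrvx : rvx G 3 = 0) :
    ∀ u v w : V, u ≠ v → u ≠ w → v ≠ w → G.Adj u v ∨ G.Adj u w := by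
  have h0 : hasRvxColoring G 3 0 := by
    rcases Nat.sInf_eq_zero.mp hrvx with h | h
    · exact h
    · exact absurd (rvx_set_nonempty hconn)
        (by rw [Set.eq_empty_iff_forall_notMem] at h; exact h _)
  obtain ⟨c, hc⟩ := h0
  intro u v w huv huw hvw
  have hS : ({u, v, w} : Finset V).card = 3 := by
    rw [Finset.card_insert_of_notMem (by simp [huv, huw]),
      Finset.card_insert_of_notMem (by simp [hvw]), Finset.card_singleton]
  obtain ⟨T, hTc, hsub, -, hbound⟩ := hc {u, v, w} hS
  have hverts : T.verts = (↑({u, v, w} : Finset V) : Set V) := by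
    refine Set.Subset.antisymm (fun a ha => ?_) hsub
    by_contra hna
    exact Nat.not_lt_zero _ (hbound a ⟨ha, hna⟩)
  have hu : u ∈ T.verts := hsub (by simp)
  have hv : v ∈ T.verts := hsub (by simp)
  obtain ⟨x, hux⟩ := exists_adj_aux hTc hu hv huv
  have hx : x ∈ T.verts := T.edge_vert hux.symm
  rw [hverts] at hx
  simp only [Finset.coe_insert, Finset.coe_singleton, Set.mem_insert_iff,
    Set.mem_singleton_iff] at hx
  have hGux : G.Adj u x := T.adj_sub hux
  rcases hx with rfl | rfl | rfl
  · exact absurd rfl hGux.ne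
  · exact Or.inl hGux
  · exact Or.inr hGux

private lemma steinerDist_set_nonempty (hconn : G.Connected) (S : Set V) :
    ∃ m, ∃ T : G.Subgraph, T.Connected ∧ S ⊆ T.verts ∧ T.edgeSet.ncard = m :=
  ⟨_, ⊤, top_connected hconn, by simp, rfl⟩

private lemma Q_imp_steinerDist
    (hQ : ∀ u v w : V, u ≠ v → u ≠ w → v ≠ w → G.Adj u v ∨ G.Adj u w)
    (S : Finset V) (hS : S.card = 3) : steinerDist G (↑S) = 2 := by
  obtain ⟨u, v, w, huv, huw, hvw, rfl⟩ := Finset.card_eq_three.mp hS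
  obtain ⟨x, y, z, hset, hxy, hxz, hyz⟩ := center_of_Q hQ huv huw hvw
  obtain ⟨T, hTc, hTv, hTe⟩ := build_T hxy hxz
  have hcoe : (↑({u, v, w} : Finset V) : Set V) = T.verts := by
    rw [hTv, ← hset]; simp
  have hxyz : s(x, y) ≠ s(x, z) := by
    intro h
    rw [Sym2.eq_iff] at h
    rcases h with ⟨-, h⟩ | ⟨h1, h2⟩
    · exact hyz h
    · exact hyz (h2.trans h1)
  have hmem : 2 ∈ {m | ∃ T : G.Subgraph, T.Connected ∧
      (↑({u, v, w} : Finset V) : Set V) ⊆ T.verts ∧ T.edgeSet.ncard = m} :=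
    ⟨T, hTc, hcoe.le, by rw [hTe]; exact Set.ncard_pair hxyz⟩
  refine le_antisymm (Nat.sInf_le hmem) ?_
  obtain ⟨T', hc', hsub', hcard'⟩ := Nat.sInf_mem (Set.nonempty_of_mem hmem)
  rw [steinerDist, ← hcard']
  exact two_le_ncard_edges hc' (hsub' (by simp)) (hsub' (by simp)) (hsub' (by simp)) huv huw hvw

private lemma Q_imp_sdiam (hn3 : 3 ≤ Fintype.card V)
    (hQ : ∀ u v w : V, u ≠ v → u ≠ w → v ≠ w → G.Adj u v ∨ G.Adj u w) :
    sdiam G 3 = 2 := by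
  obtain ⟨S0, -, hS0⟩ := Finset.exists_subset_card_eq (s := (Finset.univ : Finset V))
    (n := 3) (by simpa using hn3)
  refine le_antisymm (Finset.sup_le fun S hS => ?_) ?_
  · rw [Finset.mem_powersetCard] at hS
    exact (Q_imp_steinerDist hQ S hS.2).le
  · have h := Finset.le_sup (f := fun S : Finset V => steinerDist G (S : Set V))
      (Finset.mem_powersetCard.mpr ⟨Finset.subset_univ _, hS0⟩)
    simp only [Q_imp_steinerDist hQ S0 hS0] at h
    exact h

private lemma sdiam_imp_Q (hconn : G.Connected) (hsd : sdiam G 3 = 2) :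
    ∀ u v w : V, u ≠ v → u ≠ w → v ≠ w → G.Adj u v ∨ G.Adj u w := by
  intro u v w huv huw hvw
  by_contra hcon
  push_neg at hcon
  obtain ⟨hnv, hnw⟩ := hcon
  have hS : ({u, v, w} : Finset V).card = 3 := by
    rw [Finset.card_insert_of_notMem (by simp [huv, huw]),
      Finset.card_insert_of_notMem (by simp [hvw]), Finset.card_singleton]
  have hle : steinerDist G (↑({u, v, w} : Finset V)) ≤ 2 := by
    rw [← hsd]
    exact Finset.le_sup (f := fun S : Finset V => steinerDist G (S : Set V))
      (Finset.mem_powersetCard.mpr ⟨Finset.subset_univ _, hS⟩)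
  obtain ⟨T, hTc, hsub, hcard⟩ := Nat.sInf_mem
    (Set.nonempty_of_mem (Set.mem_setOf.mpr (steinerDist_set_nonempty hconn
      (↑({u, v, w} : Finset V))).choose_spec) :
      Set.Nonempty {m | ∃ T : G.Subgraph, T.Connected ∧
        (↑({u, v, w} : Finset V) : Set V) ⊆ T.verts ∧ T.edgeSet.ncard = m})
  have hcard2 : T.edgeSet.ncard ≤ 2 := by rw [hcard]; exact hle
  have hu : u ∈ T.verts := hsub (by simp)
  have hv : v ∈ T.verts := hsub (by simp)
  have hw : w ∈ T.verts := hsub (by simp)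
  obtain ⟨x, hux⟩ := exists_adj_aux hTc hu hv huv
  have hGux : G.Adj u x := T.adj_sub hux
  have hxu : x ≠ u := hGux.ne'
  have hxv : x ≠ v := fun h => hnv (h ▸ hGux)
  have hxw : x ≠ w := fun h => hnw (h ▸ hGux)
  obtain ⟨y, hvy⟩ := exists_adj_aux hTc hv hu huv.symm
  obtain ⟨z, hwz⟩ := exists_adj_aux hTc hw hu huw.symm
  have he1 : s(u, x) ∈ T.edgeSet := hux
  have he2 : s(v, y) ∈ T.edgeSet := hvy
  have he3 : s(w, z) ∈ T.edgeSet := hwz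
  have h12 : s(u, x) ≠ s(v, y) := by
    intro h; rw [Sym2.eq_iff] at h
    rcases h with ⟨h1, -⟩ | ⟨-, h2⟩
    · exact huv h1
    · exact hxv h2
  have h13 : s(u, x) ≠ s(w, z) := by
    intro h; rw [Sym2.eq_iff] at h
    rcases h with ⟨h1, -⟩ | ⟨-, h2⟩
    · exact huw h1
    · exact hxw h2
  by_cases h23 : s(v, y) = s(w, z)
  · have hvw' : T.Adj v w := by
      rw [Sym2.eq_iff] at h23
      rcases h23 with ⟨h1, -⟩ | ⟨-, h2⟩
      · exact absurd h1 hvw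
      · exact h2 ▸ hvy
    have heq : ({s(u, x), s(v, w)} : Set (Sym2 V)) = T.edgeSet := by
      apply Set.eq_of_subset_of_ncard_le
      · intro e he; rcases he with rfl | he
        · exact he1
        · rcases he with rfl; exact hvw'
      · calc T.edgeSet.ncard ≤ 2 := hcard2
        _ = ({s(u, x), s(v, w)} : Set (Sym2 V)).ncard := by
            rw [Set.ncard_pair]
            intro h; rw [Sym2.eq_iff] at h
            rcases h with ⟨h1, -⟩ | ⟨-, h2⟩
            · exact huv h1
            · exact hxv h2
      · exact Set.toFinite _
    have hA : ∀ a b : V, T.Adj a b → a ∈ ({u, x} : Set V) → b ∈ ({u, x} : Set V) := by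
      intro a b hab ha
      have hmem : s(a, b) ∈ T.edgeSet := hab
      rw [← heq] at hmem
      rcases hmem with h | h
      · rw [Sym2.eq_iff] at h
        rcases h with ⟨-, h2⟩ | ⟨-, h2⟩
        · exact Or.inr h2
        · exact Or.inl h2
      · rw [Set.mem_singleton_iff, Sym2.eq_iff] at h
        exfalso
        rcases ha with rfl | rfl
        · rcases h with ⟨h1, -⟩ | ⟨h1, -⟩
          · exact huv h1
          · exact huw h1
        · rcases h with ⟨h1, -⟩ | ⟨h1, -⟩
          · exact hxv h1
          · exact hxw h1
    obtain ⟨p⟩ := hTc.coe.preconnected ⟨u, hu⟩ ⟨v, hv⟩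
    have hfin := walk_closed hA p (Or.inl rfl)
    rcases hfin with h | h
    · exact huv h.symm
    · exact hxv (h.symm : x = v)
  · have h3 : ({s(u, x), s(v, y), s(w, z)} : Set (Sym2 V)).ncard = 3 := by
      rw [Set.ncard_insert_of_notMem (by simp [h12, h13]), Set.ncard_pair h23]
    have hsubE : ({s(u, x), s(v, y), s(w, z)} : Set (Sym2 V)) ⊆ T.edgeSet := by
      intro e he
      rcases he with rfl | he
      · exact he1
      · rcases he with rfl | he
        · exact he2
        · rcases he with rfl; exact he3
    have := Set.ncard_le_ncard hsubE (Set.toFinite _)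
    omega
end

section
variable [Fintype V] [DecidableEq V] {G : SimpleGraph V} [DecidableRel G.Adj]

private lemma Q_iff_minDegree (hn3 : 3 ≤ Fintype.card V) :
    (∀ u v w : V, u ≠ v → u ≠ w → v ≠ w → G.Adj u v ∨ G.Adj u w) ↔
      Fintype.card V - 2 ≤ G.minDegree := by
  have hne : Nonempty V := Fintype.card_pos_iff.mp (by omega)
  constructor
  · intro hQ
    apply SimpleGraph.le_minDegree_of_forall_le_degree
    intro v
    set B : Finset V := Finset.univ \ G.neighborFinset v with hB
    have hvB : v ∈ B := by simp [hB]
    have hB1 : (B.erase v).card ≤ 1 := by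
      rw [Finset.card_le_one]
      intro a ha b hb
      by_contra hab
      have ha' := Finset.mem_erase.mp ha
      have hb' := Finset.mem_erase.mp hb
      rcases hQ v a b (Ne.symm ha'.1) (Ne.symm hb'.1) hab with h | h
      · exact (by simpa [hB] using ha'.2 : ¬ G.Adj v a) h
      · exact (by simpa [hB] using hb'.2 : ¬ G.Adj v b) h
    have hB2 : B.card ≤ 2 := by
      have := Finset.card_erase_of_mem hvB
      omega
    have hcard : B.card = Fintype.card V - G.degree v := by
      rw [hB, Finset.card_sdiff_of_subset (Finset.subset_univ _)]
      rfl
    have hdeg : G.degree v < Fintype.card V := G.degree_lt_card_verts v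
    omega
  · intro hδ u v w huv huw hvw
    by_contra h
    push_neg at h
    obtain ⟨h1, h2⟩ := h
    have hsub : G.neighborFinset u ⊆ Finset.univ \ {u, v, w} := by
      intro a ha
      rw [SimpleGraph.mem_neighborFinset] at ha
      simp only [Finset.mem_sdiff, Finset.mem_univ, true_and, Finset.mem_insert,
        Finset.mem_singleton]
      push_neg
      refine ⟨fun h => ha.ne' (h.symm ▸ rfl), fun h => h1 (h ▸ ha), fun h => h2 (h ▸ ha)⟩
    have hc3 : ({u, v, w} : Finset V).card = 3 := by
      rw [Finset.card_insert_of_notMem (by simp [huv, huw]),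
        Finset.card_insert_of_notMem (by simp [hvw]), Finset.card_singleton]
    have := Finset.card_le_card hsub
    rw [Finset.card_sdiff_of_subset (Finset.subset_univ _), hc3, Finset.card_univ] at this
    have hδ' := G.minDegree_le_degree u
    rw [← SimpleGraph.card_neighborFinset_eq_degree] at hδ'
    omega

private lemma minDegree_le (hn3 : 3 ≤ Fintype.card V) :
    G.minDegree ≤ Fintype.card V - 1 := by
  have hne : Nonempty V := Fintype.card_pos_iff.mp (by omega)
  obtain ⟨v⟩ := hne
  have := G.minDegree_le_degree v
  have := G.degree_lt_card_verts v
  omega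

end

end Aux

/-- for a connected graph of order `n ≥ 3`, the conditions `rvx_3(G) = 0`,
`sdiam_3(G) = 2`, and `n - 2 ≤ δ(G) ≤ n - 1` are equivalent. -/
theorem rvx_three_eq_zero_tfae {V : Type*} [Fintype V] [DecidableEq V] (G : SimpleGraph V)
    [DecidableRel G.Adj] (n : ℕ) (hn : n = Fintype.card V) (hn3 : 3 ≤ n)
    (hconn : G.Connected) :
    (rvx G 3 = 0 ↔ sdiam G 3 = 2) ∧
    (rvx G 3 = 0 ↔ (n - 2 ≤ G.minDegree ∧ G.minDegree ≤ n - 1)) := by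
  subst hn
  have hQr : rvx G 3 = 0 ↔
      (∀ u v w : V, u ≠ v → u ≠ w → v ≠ w → G.Adj u v ∨ G.Adj u w) :=
    ⟨rvx_imp_Q hconn, Q_imp_rvx⟩
  have hQs : sdiam G 3 = 2 ↔
      (∀ u v w : V, u ≠ v → u ≠ w → v ≠ w → G.Adj u v ∨ G.Adj u w) :=
    ⟨sdiam_imp_Q hconn, Q_imp_sdiam hn3⟩
  refine ⟨hQr.trans hQs.symm, hQr.trans ?_⟩
  rw [Q_iff_minDegree hn3]
  exact ⟨fun h => ⟨h, minDegree_le hn3⟩, fun h => h.1⟩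
end

section
/- If G and \bar{G} are both connected graphs of order 5, then rvx_3(G) + rvx_3(\bar{G}) ≤ 4. -/
open Finset

/-! ### Bitmask BFS on 5 vertices -/

def lsb5 (w : ℕ) : ℕ :=
  if w.testBit 0 then 0 else if w.testBit 1 then 1 else if w.testBit 2 then 2
  else if w.testBit 3 then 3 else 4

def bit1 (b : Bool) (t : ℕ) : ℕ := cond b (2^t) 0

def nbrF (f : ℕ → ℕ → Bool) (r v : ℕ) : Bool :=
  r.testBit v || (r.testBit 0 && (f 0 v || f v 0)) || (r.testBit 1 && (f 1 v || f v 1))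
    || (r.testBit 2 && (f 2 v || f v 2)) || (r.testBit 3 && (f 3 v || f v 3))
    || (r.testBit 4 && (f 4 v || f v 4))

def growF (f : ℕ → ℕ → Bool) (w r : ℕ) : ℕ :=
  bit1 (w.testBit 0 && nbrF f r 0) 0 ||| bit1 (w.testBit 1 && nbrF f r 1) 1
    ||| bit1 (w.testBit 2 && nbrF f r 2) 2 ||| bit1 (w.testBit 3 && nbrF f r 3) 3
    ||| bit1 (w.testBit 4 && nbrF f r 4) 4

def reachF (f : ℕ → ℕ → Bool) (w s : ℕ) : ℕ := (growF f w)^[4] (2^s)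

def bconnF (f : ℕ → ℕ → Bool) (w : ℕ) : Prop := w &&& reachF f w (lsb5 w) = w

instance (f : ℕ → ℕ → Bool) (w : ℕ) : Decidable (bconnF f w) :=
  decidable_of_iff (w &&& reachF f w (lsb5 w) = w) Iff.rfl

/-- `ext5 c` extends a coloring of vertices `1..4` by giving vertex `0` the color `0`. -/
def ext5 {m : ℕ} (c : Fin 4 → Fin m) : Fin 5 → Fin m :=
  fun v => if _ : v.val = 0 then ⟨0, (c ⟨0, by omega⟩).pos⟩ else c ⟨v.val - 1, by omega⟩

def goodF (f : ℕ → ℕ → Bool) (m : ℕ) : Prop :=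
  ∃ c : Fin 4 → Fin m, ∀ x y : Fin 5, x < y → ext5 c x = ext5 c y →
    bconnF f (31 - 2^x.val) ∨ bconnF f (31 - 2^y.val) ∨ bconnF f (31 - 2^x.val - 2^y.val)

instance (f : ℕ → ℕ → Bool) (m : ℕ) : Decidable (goodF f m) :=
  decidable_of_iff (∃ c : Fin 4 → Fin m, ∀ x y : Fin 5, x < y → ext5 c x = ext5 c y →
    bconnF f (31 - 2^x.val) ∨ bconnF f (31 - 2^y.val) ∨ bconnF f (31 - 2^x.val - 2^y.val))
    Iff.rfl

/-- The simple graph on `Fin 5` coded by an adjacency-bit function. -/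
def graphF (f : ℕ → ℕ → Bool) : SimpleGraph (Fin 5) :=
  SimpleGraph.fromRel (fun i j => f i.val j.val = true)

instance (f : ℕ → ℕ → Bool) : DecidableRel (graphF f).Adj := fun i j =>
  decidable_of_iff _ (SimpleGraph.fromRel_adj _ i j).symm

lemma graphF_adj (f : ℕ → ℕ → Bool) (i j : Fin 5) :
    (graphF f).Adj i j ↔ i ≠ j ∧ (f i.val j.val = true ∨ f j.val i.val = true) :=
  SimpleGraph.fromRel_adj _ i j

/-! ### Basic bit lemmas -/

lemma testBit_bit1 (b : Bool) (t u : ℕ) : (bit1 b t).testBit u = (b && decide (t = u)) := by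
  cases b <;> simp [bit1, Nat.testBit_two_pow]

lemma testBit_growF (f : ℕ → ℕ → Bool) (w r : ℕ) {t : ℕ} (ht : t < 5) :
    (growF f w r).testBit t = (w.testBit t && nbrF f r t) := by
  interval_cases t <;> simp [growF, Nat.testBit_or, testBit_bit1, -Nat.testBit_zero, -Nat.testBit_succ]

lemma nbrF_sound {f : ℕ → ℕ → Bool} {r t : ℕ} (h : nbrF f r t = true) :
    r.testBit t = true ∨ ∃ u, u < 5 ∧ r.testBit u = true ∧ (f u t || f t u) = true := by
  simp only [nbrF, Bool.or_eq_true, Bool.and_eq_true] at h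
  rcases h with ((((h | h) | h) | h) | h) | h
  · exact Or.inl h
  · exact Or.inr ⟨0, by norm_num, h.1, by simpa using h.2⟩
  · exact Or.inr ⟨1, by norm_num, h.1, by simpa using h.2⟩
  · exact Or.inr ⟨2, by norm_num, h.1, by simpa using h.2⟩
  · exact Or.inr ⟨3, by norm_num, h.1, by simpa using h.2⟩
  · exact Or.inr ⟨4, by norm_num, h.1, by simpa using h.2⟩

lemma nbrF_intro {f : ℕ → ℕ → Bool} {r t : ℕ} (u : ℕ) (hu : u < 5)
    (h1 : r.testBit u = true) (h2 : (f u t || f t u) = true) : nbrF f r t = true := by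
  interval_cases u <;> simp [nbrF, h1, h2]

lemma nbrF_self {f : ℕ → ℕ → Bool} {r t : ℕ} (h : r.testBit t = true) :
    nbrF f r t = true := by simp [nbrF, h]

lemma testBit31 {t : ℕ} (ht : t < 5) : Nat.testBit 31 t = true := by
  interval_cases t <;> decide

lemma testBit_ge5 {w t : ℕ} (hw : w < 32) (ht : 5 ≤ t) : w.testBit t = false := by
  apply Nat.testBit_lt_two_pow
  calc w < 32 := hw
    _ ≤ 2^t := by
        calc (32:ℕ) = 2^5 := by norm_num
          _ ≤ 2^t := Nat.pow_le_pow_right (by norm_num) ht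

lemma lsb5_mem {w : ℕ} (h32 : w < 32) (h0 : w ≠ 0) :
    w.testBit (lsb5 w) = true ∧ lsb5 w < 5 := by
  interval_cases w <;> first | omega | decide

/-- Vertex set of `Fin 5` described by a bit mask. -/
def mset (w : ℕ) : Set (Fin 5) := {v : Fin 5 | w.testBit v.val = true}

/-! ### Soundness of the bit BFS -/

lemma reach_sound (f : ℕ → ℕ → Bool) {w s : ℕ} (hs5 : s < 5) (hsw : w.testBit s = true) :
    ∀ n t, (ht : t < 5) → ((growF f w)^[n] (2^s)).testBit t = true →
      ∃ htw : w.testBit t = true,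
        (SimpleGraph.induce (mset w) (graphF f)).Reachable ⟨⟨s, hs5⟩, hsw⟩ ⟨⟨t, ht⟩, htw⟩ := by
  intro n
  induction n with
  | zero =>
    intro t ht hbit
    simp only [Function.iterate_zero, id_eq, Nat.testBit_two_pow] at hbit
    have : s = t := by simpa using hbit
    subst this
    exact ⟨hsw, SimpleGraph.Reachable.refl _⟩
  | succ n ih =>
    intro t ht hbit
    rw [Function.iterate_succ_apply', testBit_growF f w _ ht, Bool.and_eq_true] at hbit
    obtain ⟨hwt, hnbr⟩ := hbit
    rcases nbrF_sound hnbr with h | ⟨u, hu5, hru, hadj⟩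
    · exact ih t ht h
    · by_cases hut : u = t
      · subst hut; exact ih u ht hru
      · obtain ⟨huw, hr⟩ := ih u hu5 hru
        refine ⟨hwt, hr.trans (SimpleGraph.Adj.reachable ?_)⟩
        show (graphF f).Adj ⟨u, hu5⟩ ⟨t, ht⟩
        rw [graphF_adj]
        refine ⟨by simpa [Fin.ext_iff] using hut, ?_⟩
        simpa using hadj

/-! ### Completeness of the bit BFS on the full vertex set -/

lemma grow_keep (f : ℕ → ℕ → Bool) {r t : ℕ} (ht : t < 5) (h : r.testBit t = true) :
    (growF f 31 r).testBit t = true := by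
  rw [testBit_growF f 31 r ht, testBit31 ht]
  simpa using nbrF_self h

lemma mono31 (f : ℕ → ℕ → Bool) (n : ℕ) {r t : ℕ} (ht : t < 5) (h : r.testBit t = true) :
    ((growF f 31)^[n] r).testBit t = true := by
  induction n with
  | zero => simpa using h
  | succ n ih =>
    rw [Function.iterate_succ_apply']
    exact grow_keep f ht ih

lemma walk_reach (f : ℕ → ℕ → Bool) {u v : Fin 5} (p : (graphF f).Walk u v) :
    ∀ n r, p.length ≤ n → r.testBit u.val = true →
      ((growF f 31)^[n] r).testBit v.val = true := by
  induction p with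
  | nil => exact fun n r _ h => mono31 f n (Fin.is_lt _) h
  | @cons a b c hadj p ih =>
    intro n r hlen hu
    cases n with
    | zero => simp at hlen
    | succ m =>
      rw [Function.iterate_succ_apply]
      refine ih m _ (by simpa using hlen) ?_
      rw [testBit_growF f 31 r (Fin.is_lt _), testBit31 (Fin.is_lt _), Bool.true_and]
      rw [graphF_adj] at hadj
      refine nbrF_intro a.val (Fin.is_lt _) hu ?_
      rcases hadj.2 with h | h <;> simp [h]

lemma conn_bconnF31 (f : ℕ → ℕ → Bool) (h : (graphF f).Connected) : bconnF f 31 := by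
  have l0 : lsb5 31 = 0 := by decide
  show 31 &&& reachF f 31 (lsb5 31) = 31
  rw [l0]
  apply Nat.eq_of_testBit_eq
  intro i
  rw [Nat.testBit_and]
  by_cases hi : i < 5
  · rw [testBit31 hi, Bool.true_and]
    have hreach := h.preconnected ⟨0, by norm_num⟩ ⟨i, hi⟩
    refine hreach.elim fun q => ?_
    have hp := q.toPath
    have hlen : hp.val.length ≤ 4 := by
      have := hp.prop.length_lt
      simp only [Fintype.card_fin] at this
      omega
    exact walk_reach f hp.val 4 (2^0) hlen (by decide)
  · rw [testBit_ge5 (by norm_num) (by omega), Bool.false_and]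

lemma bconnF_elim {f : ℕ → ℕ → Bool} {w : ℕ} (h : bconnF f w) {t : ℕ}
    (ht : w.testBit t = true) : (reachF f w (lsb5 w)).testBit t = true := by
  have h2 := congrArg (fun z => z.testBit t) h
  simp only [Nat.testBit_and, ht, Bool.true_and] at h2
  exact h2

/-! ### From bit connectivity to connected subgraphs -/

lemma exists_subgraph_of_bconnF (f : ℕ → ℕ → Bool) {w : ℕ} (h32 : w < 32) (h0 : w ≠ 0)
    (h : bconnF f w) :
    ∃ T : (graphF f).Subgraph, T.Connected ∧ T.verts = mset w := by
  obtain ⟨hsbit, hs5⟩ := lsb5_mem h32 h0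
  refine ⟨(⊤ : (graphF f).Subgraph).induce (mset w), ?_, rfl⟩
  rw [SimpleGraph.Subgraph.connected_iff]
  refine ⟨SimpleGraph.Subgraph.preconnected_iff.mpr ?_, ⟨⟨lsb5 w, hs5⟩, hsbit⟩⟩
  have heq : ((⊤ : (graphF f).Subgraph).induce (mset w)).coe
      = SimpleGraph.induce (mset w) (graphF f) := by
    ext a b
    constructor
    · rintro ⟨-, -, h'⟩
      exact h'
    · intro h'
      exact ⟨a.2, b.2, h'⟩
  rw [heq]
  rintro ⟨⟨xv, hx5⟩, hxw⟩ ⟨⟨yv, hy5⟩, hyw⟩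
  obtain ⟨hxw2, rx⟩ := reach_sound f hs5 hsbit 4 xv hx5 (bconnF_elim h hxw)
  obtain ⟨hyw2, ry⟩ := reach_sound f hs5 hsbit 4 yv hy5 (bconnF_elim h hyw)
  exact SimpleGraph.Reachable.trans (SimpleGraph.Reachable.symm rx) ry

/-! ### Mask facts (decidable) -/

lemma mask1_facts : ∀ x : Fin 5, 31 - 2^x.val < 32 ∧ 31 - 2^x.val ≠ 0 := by decide
lemma mask2_facts : ∀ x y : Fin 5, 31 - 2^x.val - 2^y.val < 32 ∧
    (x ≠ y → 31 - 2^x.val - 2^y.val ≠ 0) := by decide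
lemma mask1_bit : ∀ x v : Fin 5, ((31 - 2^x.val).testBit v.val = true) ↔ v ≠ x := by decide
lemma mask2_bit : ∀ x y v : Fin 5, x ≠ y →
    (((31 - 2^x.val - 2^y.val).testBit v.val = true) ↔ (v ≠ x ∧ v ≠ y)) := by decide

/-! ### goodF gives rainbow colorings -/

lemma goodF_hasRvx (f : ℕ → ℕ → Bool) (m : ℕ) (hconn : (graphF f).Connected)
    (h : goodF f m) : hasRvxColoring (graphF f) 3 m := by
  obtain ⟨c0, hc⟩ := h
  set c : Fin 5 → Fin m := ext5 c0 with hcdef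
  refine ⟨fun v => (c v).val, ?_⟩
  intro S hS
  have hcard : (univ \ S).card = 2 := by
    rw [card_sdiff_of_subset (subset_univ S), hS]
    simp
  obtain ⟨x, y, hxy, hset⟩ := Finset.card_eq_two.mp hcard
  have hmem : ∀ v : Fin 5, v ∉ S ↔ (v = x ∨ v = y) := by
    intro v
    constructor
    · intro hv
      have : v ∈ univ \ S := mem_sdiff.mpr ⟨mem_univ v, hv⟩
      rw [hset] at this
      simpa using this
    · intro hv
      have : v ∈ ({x, y} : Finset (Fin 5)) := by simpa using hv
      rw [← hset] at this
      exact (mem_sdiff.mp this).2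
  have hxS : x ∉ S := (hmem x).mpr (Or.inl rfl)
  have hyS : y ∉ S := (hmem y).mpr (Or.inr rfl)
  by_cases hxyc : c x = c y
  · -- monochromatic pair: use the hypothesis
    have hOK : bconnF f (31 - 2^x.val) ∨ bconnF f (31 - 2^y.val) ∨
        bconnF f (31 - 2^x.val - 2^y.val) := by
      rcases lt_or_gt_of_ne hxy with hlt | hgt
      · exact hc x y hlt hxyc
      · rcases hc y x hgt hxyc.symm with h' | h' | h'
        · exact Or.inr (Or.inl h')
        · exact Or.inl h'
        · refine Or.inr (Or.inr ?_)
          have heq : 31 - 2^y.val - 2^x.val = 31 - 2^x.val - 2^y.val := by omega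
          rwa [heq] at h'
    rcases hOK with hb | hb | hb
    · -- delete x
      obtain ⟨T, hTc, hTv⟩ := exists_subgraph_of_bconnF f (mask1_facts x).1 (mask1_facts x).2 hb
      refine ⟨T, hTc, ?_, ?_, ?_⟩
      · intro v hv
        rw [hTv]
        exact (mask1_bit x v).mpr (fun hvx => hxS (hvx ▸ hv))
      · have hsub : T.verts \ ↑S ⊆ {y} := by
          rintro v ⟨hv1, hv2⟩
          rw [hTv] at hv1
          have hvx : v ≠ x := (mask1_bit x v).mp hv1
          rcases (hmem v).mp hv2 with h' | h'
          · exact absurd h' hvx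
          · simp [h']
        exact (Set.subsingleton_singleton.anti hsub).injOn _
      · exact fun v _ => (c v).isLt
    · -- delete y
      obtain ⟨T, hTc, hTv⟩ := exists_subgraph_of_bconnF f (mask1_facts y).1 (mask1_facts y).2 hb
      refine ⟨T, hTc, ?_, ?_, ?_⟩
      · intro v hv
        rw [hTv]
        exact (mask1_bit y v).mpr (fun hvy => hyS (hvy ▸ hv))
      · have hsub : T.verts \ ↑S ⊆ {x} := by
          rintro v ⟨hv1, hv2⟩
          rw [hTv] at hv1
          have hvy : v ≠ y := (mask1_bit y v).mp hv1
          rcases (hmem v).mp hv2 with h' | h'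
          · simp [h']
          · exact absurd h' hvy
        exact (Set.subsingleton_singleton.anti hsub).injOn _
      · exact fun v _ => (c v).isLt
    · -- delete both
      obtain ⟨T, hTc, hTv⟩ := exists_subgraph_of_bconnF f (mask2_facts x y).1
        ((mask2_facts x y).2 hxy) hb
      refine ⟨T, hTc, ?_, ?_, ?_⟩
      · intro v hv
        rw [hTv]
        exact (mask2_bit x y v hxy).mpr
          ⟨fun hvx => hxS (hvx ▸ hv), fun hvy => hyS (hvy ▸ hv)⟩
      · have hsub : T.verts \ ↑S ⊆ ∅ := by
          rintro v ⟨hv1, hv2⟩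
          rw [hTv] at hv1
          obtain ⟨hvx, hvy⟩ := (mask2_bit x y v hxy).mp hv1
          rcases (hmem v).mp hv2 with h' | h'
          · exact absurd h' hvx
          · exact absurd h' hvy
        exact (Set.subsingleton_empty.anti hsub).injOn _
      · exact fun v _ => (c v).isLt
  · -- x y get distinct colors: use the whole graph
    refine ⟨⊤, ?_, ?_, ?_, fun v _ => (c v).isLt⟩
    · rw [SimpleGraph.Subgraph.connected_iff']
      exact (SimpleGraph.Subgraph.topIso).connected_iff.mpr hconn
    · simp
    · have hsub : (⊤ : (graphF f).Subgraph).verts \ ↑S ⊆ {x, y} := by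
        rintro v ⟨-, hv2⟩
        rcases (hmem v).mp hv2 with h' | h' <;> simp [h']
      intro a ha b hb hab
      have ha' := hsub ha
      have hb' := hsub hb
      simp only [Set.mem_insert_iff, Set.mem_singleton_iff] at ha' hb'
      have hval : c a = c b := Fin.val_injective hab
      rcases ha' with rfl | rfl <;> rcases hb' with rfl | rfl
      · rfl
      · exact absurd hval hxyc
      · exact absurd hval.symm hxyc
      · rfl

/-! ### Coding graphs by 10 bits -/

def eidxN : ℕ → ℕ → Fin 10 := fun u v => match u, v with
  | 0,1 => 0 | 1,0 => 0 | 0,2 => 1 | 2,0 => 1 | 0,3 => 2 | 3,0 => 2 | 0,4 => 3 | 4,0 => 3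
  | 1,2 => 4 | 2,1 => 4 | 1,3 => 5 | 3,1 => 5 | 1,4 => 6 | 4,1 => 6
  | 2,3 => 7 | 3,2 => 7 | 2,4 => 8 | 4,2 => 8 | 3,4 => 9 | 4,3 => 9 | _,_ => 0

def fOf (g : Fin 10 → Bool) : ℕ → ℕ → Bool := fun u v => decide (u ≠ v) && g (eidxN u v)
def fOfc (g : Fin 10 → Bool) : ℕ → ℕ → Bool := fun u v => decide (u ≠ v) && !(g (eidxN u v))

set_option maxHeartbeats 1600000 in
lemma compl_code (g : Fin 10 → Bool) : graphF (fOfc g) = (graphF (fOf g))ᶜ := by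
  ext i j
  fin_cases i <;> fin_cases j <;>
    simp [graphF_adj, SimpleGraph.compl_adj, fOf, fOfc, eidxN, Fin.ext_iff] <;> tauto

def p1 : Fin 10 → Fin 5 := fun k => match k.val with
  | 0 => 0 | 1 => 0 | 2 => 0 | 3 => 0 | 4 => 1 | 5 => 1 | 6 => 1 | 7 => 2 | 8 => 2 | _ => 3
def p2 : Fin 10 → Fin 5 := fun k => match k.val with
  | 0 => 1 | 1 => 2 | 2 => 3 | 3 => 4 | 4 => 2 | 5 => 3 | 6 => 4 | 7 => 3 | _ => 4

set_option maxHeartbeats 1600000 in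
lemma exists_code (G' : SimpleGraph (Fin 5)) : ∃ g : Fin 10 → Bool, graphF (fOf g) = G' := by
  classical
  refine ⟨fun k => decide (G'.Adj (p1 k) (p2 k)), ?_⟩
  ext i j
  fin_cases i <;> fin_cases j <;>
    simp [graphF_adj, fOf, eidxN, p1, p2, Fin.ext_iff, -Fin.val_eq_zero_iff] <;>
    first
      | tauto
      | (rw [SimpleGraph.adj_comm]; tauto)

/-! ### The finite verification -/

def P (g : Fin 10 → Bool) : Prop :=
  bconnF (fOf g) 31 → bconnF (fOfc g) 31 →
    (goodF (fOf g) 2 ∧ goodF (fOfc g) 2) ∨ (goodF (fOf g) 3 ∧ goodF (fOfc g) 1) ∨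
    (goodF (fOf g) 1 ∧ goodF (fOfc g) 3)

instance (g : Fin 10 → Bool) : Decidable (P g) := by unfold P; infer_instance

set_option maxHeartbeats 40000000 in
set_option maxRecDepth 20000 in
theorem keyP_0 : ∀ b0 b1 b2 b3 b4 b5 : Bool,
    P ![b0,b1,b2,b3,b4,b5,false,false,false,false] := by decide

set_option maxHeartbeats 40000000 in
set_option maxRecDepth 20000 in
theorem keyP_1 : ∀ b0 b1 b2 b3 b4 b5 : Bool,
    P ![b0,b1,b2,b3,b4,b5,true,false,false,false] := by decide

set_option maxHeartbeats 40000000 in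
set_option maxRecDepth 20000 in
theorem keyP_2 : ∀ b0 b1 b2 b3 b4 b5 : Bool,
    P ![b0,b1,b2,b3,b4,b5,false,true,false,false] := by decide

set_option maxHeartbeats 40000000 in
set_option maxRecDepth 20000 in
theorem keyP_3 : ∀ b0 b1 b2 b3 b4 b5 : Bool,
    P ![b0,b1,b2,b3,b4,b5,true,true,false,false] := by decide

set_option maxHeartbeats 40000000 in
set_option maxRecDepth 20000 in
theorem keyP_4 : ∀ b0 b1 b2 b3 b4 b5 : Bool,
    P ![b0,b1,b2,b3,b4,b5,false,false,true,false] := by decide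

set_option maxHeartbeats 40000000 in
set_option maxRecDepth 20000 in
theorem keyP_5 : ∀ b0 b1 b2 b3 b4 b5 : Bool,
    P ![b0,b1,b2,b3,b4,b5,true,false,true,false] := by decide

set_option maxHeartbeats 40000000 in
set_option maxRecDepth 20000 in
theorem keyP_6 : ∀ b0 b1 b2 b3 b4 b5 : Bool,
    P ![b0,b1,b2,b3,b4,b5,false,true,true,false] := by decide

set_option maxHeartbeats 40000000 in
set_option maxRecDepth 20000 in
theorem keyP_7 : ∀ b0 b1 b2 b3 b4 b5 : Bool,
    P ![b0,b1,b2,b3,b4,b5,true,true,true,false] := by decide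

set_option maxHeartbeats 40000000 in
set_option maxRecDepth 20000 in
theorem keyP_8 : ∀ b0 b1 b2 b3 b4 b5 : Bool,
    P ![b0,b1,b2,b3,b4,b5,false,false,false,true] := by decide

set_option maxHeartbeats 40000000 in
set_option maxRecDepth 20000 in
theorem keyP_9 : ∀ b0 b1 b2 b3 b4 b5 : Bool,
    P ![b0,b1,b2,b3,b4,b5,true,false,false,true] := by decide

set_option maxHeartbeats 40000000 in
set_option maxRecDepth 20000 in
theorem keyP_10 : ∀ b0 b1 b2 b3 b4 b5 : Bool,
    P ![b0,b1,b2,b3,b4,b5,false,true,false,true] := by decide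

set_option maxHeartbeats 40000000 in
set_option maxRecDepth 20000 in
theorem keyP_11 : ∀ b0 b1 b2 b3 b4 b5 : Bool,
    P ![b0,b1,b2,b3,b4,b5,true,true,false,true] := by decide

set_option maxHeartbeats 40000000 in
set_option maxRecDepth 20000 in
theorem keyP_12 : ∀ b0 b1 b2 b3 b4 b5 : Bool,
    P ![b0,b1,b2,b3,b4,b5,false,false,true,true] := by decide

set_option maxHeartbeats 40000000 in
set_option maxRecDepth 20000 in
theorem keyP_13 : ∀ b0 b1 b2 b3 b4 b5 : Bool,
    P ![b0,b1,b2,b3,b4,b5,true,false,true,true] := by decide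

set_option maxHeartbeats 40000000 in
set_option maxRecDepth 20000 in
theorem keyP_14 : ∀ b0 b1 b2 b3 b4 b5 : Bool,
    P ![b0,b1,b2,b3,b4,b5,false,true,true,true] := by decide

set_option maxHeartbeats 40000000 in
set_option maxRecDepth 20000 in
theorem keyP_15 : ∀ b0 b1 b2 b3 b4 b5 : Bool,
    P ![b0,b1,b2,b3,b4,b5,true,true,true,true] := by decide

theorem keyP : ∀ g : Fin 10 → Bool, P g := by
  intro g
  have hv : ![g 0, g 1, g 2, g 3, g 4, g 5, g 6, g 7, g 8, g 9] = g := by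
    funext i; fin_cases i <;> rfl
  rw [← hv]
  cases hb6 : g 6 with
  | false =>
    cases hb7 : g 7 with
    | false =>
      cases hb8 : g 8 with
      | false =>
        cases hb9 : g 9 with
        | false =>
          exact keyP_0 _ _ _ _ _ _
        | true =>
          exact keyP_8 _ _ _ _ _ _
      | true =>
        cases hb9 : g 9 with
        | false =>
          exact keyP_4 _ _ _ _ _ _
        | true =>
          exact keyP_12 _ _ _ _ _ _
    | true =>
      cases hb8 : g 8 with
      | false =>
        cases hb9 : g 9 with
        | false =>
          exact keyP_2 _ _ _ _ _ _
        | true =>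
          exact keyP_10 _ _ _ _ _ _
      | true =>
        cases hb9 : g 9 with
        | false =>
          exact keyP_6 _ _ _ _ _ _
        | true =>
          exact keyP_14 _ _ _ _ _ _
  | true =>
    cases hb7 : g 7 with
    | false =>
      cases hb8 : g 8 with
      | false =>
        cases hb9 : g 9 with
        | false =>
          exact keyP_1 _ _ _ _ _ _
        | true =>
          exact keyP_9 _ _ _ _ _ _
      | true =>
        cases hb9 : g 9 with
        | false =>
          exact keyP_5 _ _ _ _ _ _
        | true =>
          exact keyP_13 _ _ _ _ _ _
    | true =>
      cases hb8 : g 8 with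
      | false =>
        cases hb9 : g 9 with
        | false =>
          exact keyP_3 _ _ _ _ _ _
        | true =>
          exact keyP_11 _ _ _ _ _ _
      | true =>
        cases hb9 : g 9 with
        | false =>
          exact keyP_7 _ _ _ _ _ _
        | true =>
          exact keyP_15 _ _ _ _ _ _

/-! ### Transporting rainbow colorings along isomorphisms -/

def mapIsoHom {V W : Type*} {G : SimpleGraph V} {H : SimpleGraph W}
    (φ : G ≃g H) (T : G.Subgraph) : T.coe →g (T.map φ.toHom).coe :=
  ⟨fun a => ⟨φ a.val, ⟨a.val, a.2, rfl⟩⟩, fun {a b} hab => ⟨a.val, b.val, hab, rfl, rfl⟩⟩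

lemma subgraph_map_connected {V W : Type*} {G : SimpleGraph V} {H : SimpleGraph W}
    (φ : G ≃g H) {T : G.Subgraph} (h : T.Connected) : (T.map φ.toHom).Connected := by
  rw [SimpleGraph.Subgraph.connected_iff'] at h ⊢
  apply h.map (mapIsoHom φ T)
  rintro ⟨w, ⟨v, hv, rfl⟩⟩
  exact ⟨⟨v, hv⟩, Subtype.ext rfl⟩

lemma hasRvx_iso {V W : Type*} {G : SimpleGraph V} {H : SimpleGraph W} (φ : G ≃g H)
    {k m : ℕ} (h : hasRvxColoring G k m) : hasRvxColoring H k m := by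
  obtain ⟨c, hc⟩ := h
  refine ⟨c ∘ φ.symm, ?_⟩
  intro S hS
  obtain ⟨T, hT, hsub, hinj, hb⟩ := hc (S.map φ.symm.toEquiv.toEmbedding) (by simp [hS])
  have hverts : (T.map φ.toHom).verts = ⇑φ '' T.verts := rfl
  have hS' : (↑(S.map φ.symm.toEquiv.toEmbedding) : Set V) = ⇑φ.symm '' ↑S := by
    simp [Finset.coe_map]
  have hmem : ∀ w : W, w ∈ (T.map φ.toHom).verts \ ↑S →
      (φ.symm w : V) ∈ T.verts \ (↑(S.map φ.symm.toEquiv.toEmbedding) : Set V) := by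
    rintro w ⟨hw1, hw2⟩
    rw [hverts] at hw1
    obtain ⟨v, hv, rfl⟩ := hw1
    constructor
    · simpa using hv
    · rw [hS']
      rintro ⟨u, hu, huv⟩
      apply hw2
      have hu2 : u = φ v := φ.symm.toEquiv.injective (by simpa using huv)
      rwa [hu2] at hu
  refine ⟨T.map φ.toHom, subgraph_map_connected φ hT, ?_, ?_, ?_⟩
  · intro w hw
    rw [hverts]
    have : (φ.symm w : V) ∈ T.verts := by
      apply hsub
      rw [hS']
      exact ⟨w, hw, rfl⟩
    exact ⟨φ.symm w, this, by simp⟩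
  · intro a ha b hb hab
    have ha' := hmem a ha
    have hb' := hmem b hb
    have := hinj ha' hb' hab
    have := congrArg φ this
    simpa using this
  · intro w hw
    exact hb _ (hmem w hw)

lemma rvx_le_of_coloring {V : Type*} (G : SimpleGraph V) {k m : ℕ}
    (h : hasRvxColoring G k m) : rvx G k ≤ m := Nat.sInf_le h

/-! ### The main theorem -/

/-- if `G` and `Ḡ` are connected of order `5`, then
`rvx_3(G) + rvx_3(Ḡ) ≤ 4`. -/
theorem rvx_three_order_five {V : Type*} [Fintype V] (G : SimpleGraph V)
    (hV : Fintype.card V = 5) (h1 : G.Connected) (h2 : Gᶜ.Connected) :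
    rvx G 3 + rvx Gᶜ 3 ≤ 4 := by
  classical
  have e : V ≃ Fin 5 := Fintype.equivFinOfCardEq hV
  set G' : SimpleGraph (Fin 5) := G.comap ⇑e.symm with hG'
  have φ : G' ≃g G := { toEquiv := e.symm, map_rel_iff' := Iff.rfl }
  have hcompl : G'ᶜ = Gᶜ.comap ⇑e.symm := by
    ext i j
    simp [SimpleGraph.compl_adj, hG', Ne, EmbeddingLike.apply_eq_iff_eq]
  have φc : G'ᶜ ≃g Gᶜ :=
    { toEquiv := e.symm, map_rel_iff' := fun {a b} => by rw [hcompl]; exact Iff.rfl }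
  obtain ⟨g, hg⟩ := exists_code G'
  have hgc : graphF (fOfc g) = G'ᶜ := by rw [compl_code, hg]
  have ψ1 : graphF (fOf g) ≃g G := by rw [hg]; exact φ
  have ψ2 : graphF (fOfc g) ≃g Gᶜ := by rw [hgc]; exact φc
  have hc1 : (graphF (fOf g)).Connected := ψ1.connected_iff.mpr h1
  have hc2 : (graphF (fOfc g)).Connected := ψ2.connected_iff.mpr h2
  have hKey := keyP g (conn_bconnF31 _ hc1) (conn_bconnF31 _ hc2)
  have bound : ∀ a b : ℕ, goodF (fOf g) a → goodF (fOfc g) b →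
      rvx G 3 + rvx Gᶜ 3 ≤ a + b := by
    intro a b hA hB
    have r1 : rvx G 3 ≤ a := rvx_le_of_coloring _ (hasRvx_iso ψ1 (goodF_hasRvx _ _ hc1 hA))
    have r2 : rvx Gᶜ 3 ≤ b := rvx_le_of_coloring _ (hasRvx_iso ψ2 (goodF_hasRvx _ _ hc2 hB))
    omega
  rcases hKey with ⟨hA, hB⟩ | ⟨hA, hB⟩ | ⟨hA, hB⟩
  · exact bound 2 2 hA hB
  · have := bound 3 1 hA hB; omega
  · have := bound 1 3 hA hB; omega
end

section
/- For the path G = P_n with n ≥ 5, rvx_3(G) + rvx_3(\bar{G}) = n − 1; in particular rvx_3(P_n) = n − 2 and rvx_3(\bar{P_n}) = 1. -/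
open SimpleGraph

def icWalk {n : ℕ} : (a b : Fin n) → a.val ≤ b.val → (pathGraph n).Walk a b
  | a, b, h =>
    if heq : a = b then (Walk.nil.copy rfl heq)
    else
      have hlt : a.val < b.val := lt_of_le_of_ne h (by simpa [Fin.ext_iff] using heq)
      have hb : a.val + 1 < n := lt_of_le_of_lt hlt b.isLt
      Walk.cons (by rw [pathGraph_adj]; left; rfl) (icWalk ⟨a.val+1, hb⟩ b hlt)
  termination_by a b _ => b.val - a.val
  decreasing_by omega

lemma icWalk_support {n : ℕ} (a b : Fin n) (h : a.val ≤ b.val) (v : Fin n) :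
    v ∈ (icWalk a b h).support ↔ a.val ≤ v.val ∧ v.val ≤ b.val := by
  rw [icWalk.eq_1]
  split
  · next heq =>
    subst heq
    simp [Fin.ext_iff]
    omega
  · next heq =>
    have hlt : a.val < b.val := lt_of_le_of_ne h (by simpa [Fin.ext_iff] using heq)
    have hb : a.val + 1 < n := lt_of_le_of_lt hlt b.isLt
    rw [Walk.support_cons]
    simp only [List.mem_cons]
    rw [icWalk_support ⟨a.val+1, hb⟩ b hlt v]
    simp [Fin.ext_iff]
    omega
  termination_by b.val - a.val
  decreasing_by omega

lemma mem_support_of_between {n : ℕ} {a b : Fin n} (w : (pathGraph n).Walk a b) :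
    ∀ v : Fin n, a.val ≤ v.val → v.val ≤ b.val → v ∈ w.support := by
  induction w with
  | nil =>
    intro v h1 h2
    have : v = _ := Fin.ext (le_antisymm h2 h1)
    simp [this]
  | @cons x y z hadj p ih =>
    intro v h1 h2
    rw [Walk.support_cons]
    by_cases hv : v = x
    · simp [hv]
    · have hne : v.val ≠ x.val := fun hh => hv (Fin.ext hh)
      rw [pathGraph_adj] at hadj
      refine List.mem_cons.2 (Or.inr (ih v ?_ h2))
      omega

lemma path_upper {n : ℕ} (hn : 5 ≤ n) : hasRvxColoring (pathGraph n) 3 (n-2) := by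
  refine ⟨fun v => v.val - 1, ?_⟩
  intro S hS
  have hne : S.Nonempty := by rw [← Finset.card_pos, hS]; omega
  set a := S.min' hne with ha
  set b := S.max' hne with hb
  have hab : a.val ≤ b.val := S.min'_le b (S.max'_mem hne)
  refine ⟨(icWalk a b hab).toSubgraph, Walk.toSubgraph_connected _, ?_, ?_, ?_⟩
  · intro s hs
    rw [Walk.mem_verts_toSubgraph, icWalk_support]
    exact ⟨S.min'_le s hs, S.le_max' s hs⟩
  · intro u hu v hv heq
    simp only [Set.mem_diff, Walk.mem_verts_toSubgraph, icWalk_support] at hu hv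
    have hua : u ≠ a := fun h => hu.2 (by rw [h]; exact_mod_cast S.min'_mem hne)
    have hva : v ≠ a := fun h => hv.2 (by rw [h]; exact_mod_cast S.min'_mem hne)
    have h1 : u.val ≠ a.val := fun h => hua (Fin.ext h)
    have h2 : v.val ≠ a.val := fun h => hva (Fin.ext h)
    simp only at heq
    exact Fin.ext (by omega)
  · intro v hv
    simp only [Set.mem_diff, Walk.mem_verts_toSubgraph, icWalk_support] at hv
    have hvb : v ≠ b := fun h => hv.2 (by rw [h]; exact_mod_cast S.max'_mem hne)
    have h2 : v.val ≠ b.val := fun h => hvb (Fin.ext h)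
    have := b.isLt
    simp only
    omega

lemma path_lower {n : ℕ} (hn : 5 ≤ n) {m : ℕ}
    (hm : hasRvxColoring (pathGraph n) 3 m) : n - 2 ≤ m := by
  obtain ⟨c, hc⟩ := hm
  set z : Fin n := ⟨0, by omega⟩ with hz
  set l : Fin n := ⟨n-1, by omega⟩ with hl
  set I : Finset (Fin n) := Finset.Icc ⟨1, by omega⟩ ⟨n-2, by omega⟩ with hI
  have hIcard : I.card = n - 2 := by rw [hI, Fin.card_Icc]; simp
  have hmemI : ∀ v : Fin n, v ∈ I ↔ 1 ≤ v.val ∧ v.val ≤ n - 2 := by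
    intro v; rw [hI, Finset.mem_Icc]; exact Iff.rfl
  have main : ∀ i ∈ I, ∀ j ∈ I, i ≠ j → c i ≠ c j ∧ c i < m := by
    intro i hi j hj hij
    obtain ⟨k, hk⟩ : (I \ {i, j}).Nonempty := by
      rw [← Finset.card_pos]
      have h1 := Finset.le_card_sdiff ({i, j} : Finset (Fin n)) I
      have h2 : ({i, j} : Finset (Fin n)).card ≤ 2 :=
        (Finset.card_insert_le _ _).trans (by simp)
      omega
    rw [Finset.mem_sdiff, Finset.mem_insert, Finset.mem_singleton, hmemI] at hk
    obtain ⟨⟨hk1, hk2⟩, hk3⟩ := hk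
    set S : Finset (Fin n) := {z, k, l} with hS
    have hScard : S.card = 3 := by
      rw [hS, Finset.card_insert_of_notMem, Finset.card_insert_of_notMem,
        Finset.card_singleton]
      · simp only [Finset.mem_singleton]; intro h
        have := congrArg Fin.val h; simp [hl] at this; omega
      · simp only [Finset.mem_insert, Finset.mem_singleton]
        push_neg
        constructor <;> (intro h; have := congrArg Fin.val h; simp [hz, hl] at this; omega)
    obtain ⟨T, hTc, hTS, hinj, hlt⟩ := hc S hScard
    have hall : ∀ v : Fin n, v ∈ T.verts := by
      have hzv : z ∈ T.verts := hTS (by simp [hS])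
      have hlv : l ∈ T.verts := hTS (by simp [hS])
      obtain ⟨w⟩ := hTc ⟨z, hzv⟩ ⟨l, hlv⟩
      intro v
      have hv := mem_support_of_between (w.map T.hom) v (by simp [hz]) (by
        have := v.isLt; simp [hl]; omega)
      rw [Walk.support_map] at hv
      obtain ⟨u, _, huv⟩ := List.mem_map.mp hv
      exact huv ▸ u.2
    have hnotS : ∀ v : Fin n, 1 ≤ v.val → v.val ≤ n - 2 → v ≠ k → v ∈ T.verts \ ↑S := by
      intro v hv1 hv2 hvk
      refine ⟨hall v, ?_⟩
      simp only [hS, Finset.coe_insert, Set.mem_insert_iff, Finset.coe_singleton,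
        Set.mem_singleton_iff, not_or]
      refine ⟨fun h => ?_, hvk, fun h => ?_⟩
      · have := congrArg Fin.val h; simp [hz] at this; omega
      · have := congrArg Fin.val h; simp [hl] at this; omega
    rw [hmemI] at hi hj
    have hiT := hnotS i hi.1 hi.2 (fun h => (not_or.mp hk3).1 h.symm)
    have hjT := hnotS j hj.1 hj.2 (fun h => (not_or.mp hk3).2 h.symm)
    exact ⟨fun heq => hij (hinj hiT hjT heq), hlt i hiT⟩
  calc n - 2 = I.card := hIcard.symm
    _ ≤ (Finset.range m).card := by
        refine Finset.card_le_card_of_injOn c (fun v hv => Finset.mem_range.mpr ?_) ?_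
        · obtain ⟨j, hj⟩ : (I \ {v}).Nonempty := by
            rw [← Finset.card_pos]
            have h1 := Finset.le_card_sdiff ({v} : Finset (Fin n)) I
            simp only [Finset.card_singleton] at h1
            omega
          rw [Finset.mem_sdiff, Finset.mem_singleton] at hj
          exact (main v hv j hj.1 (fun h => hj.2 h.symm)).2
        · intro x hx y hy hxy
          by_contra hne
          exact (main x hx y hy hne).1 hxy
    _ = m := Finset.card_range m

lemma compAdj {n : ℕ} {u v : Fin n} (h1 : u.val ≠ v.val) (h2 : u.val + 1 ≠ v.val)
    (h3 : v.val + 1 ≠ u.val) : (pathGraph n)ᶜ.Adj u v := by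
  rw [compl_adj]
  refine ⟨fun h => h1 (congrArg Fin.val h), fun h => ?_⟩
  rw [pathGraph_adj] at h
  omega

lemma sorted3 {α : Type*} [LinearOrder α] {S : Finset α} (h : S.card = 3) :
    ∃ x y z : α, x < y ∧ y < z ∧ S = {x, y, z} := by
  obtain ⟨a, b, c, hab, hac, hbc, rfl⟩ := Finset.card_eq_three.mp h
  have hperm : ∀ p q r : α, ({p,q,r} : Finset α) = {q,p,r} ∧ ({p,q,r} : Finset α) = {p,r,q} := by
    intro p q r
    constructor <;> (ext w; simp; tauto)
  rcases hab.lt_or_gt with h1 | h1 <;> rcases hac.lt_or_gt with h2 | h2 <;>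
    rcases hbc.lt_or_gt with h3 | h3
  · exact ⟨a, b, c, h1, h3, rfl⟩
  · exact ⟨a, c, b, h2, h3, by ext w; simp; tauto⟩
  · exact absurd (h1.trans h3) (not_lt.mpr h2.le)
  · exact ⟨c, a, b, h2, h1, by ext w; simp; tauto⟩
  · exact ⟨b, a, c, h1, h2, by ext w; simp; tauto⟩
  · exact absurd (h2.trans h3) (not_lt.mpr h1.le)
  · exact ⟨b, c, a, h3, h2, by ext w; simp; tauto⟩
  · exact ⟨c, b, a, h3, h1, by ext w; simp; tauto⟩

lemma comp_upper {n : ℕ} (hn : 5 ≤ n) : hasRvxColoring (pathGraph n)ᶜ 3 1 := by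
  refine ⟨fun _ => 0, ?_⟩
  intro S hS
  obtain ⟨x, y, z, hxy, hyz, rfl⟩ := sorted3 hS
  have hxy' : x.val < y.val := hxy
  have hyz' : y.val < z.val := hyz
  have hzlt := z.isLt
  by_cases h1 : y.val = x.val + 1
  · by_cases h2 : z.val = y.val + 1
    · by_cases hx0 : x.val = 0
      · -- consecutive starting at 0, use w = 3 : walk z → x → w → y
        set w : Fin n := ⟨3, by omega⟩ with hwdef
        have hw3 : w.val = 3 := rfl
        have a1 : (pathGraph n)ᶜ.Adj z x := compAdj (by omega) (by omega) (by omega)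
        have a2 : (pathGraph n)ᶜ.Adj x w := compAdj (by omega) (by omega) (by omega)
        have a3 : (pathGraph n)ᶜ.Adj w y := compAdj (by omega) (by omega) (by omega)
        set W : (pathGraph n)ᶜ.Walk z y :=
          Walk.cons a1 (Walk.cons a2 (Walk.cons a3 Walk.nil)) with hW
        refine ⟨W.toSubgraph, W.toSubgraph_connected, ?_, ?_, fun v _ => Nat.one_pos⟩
        · intro s hs
          rw [Walk.mem_verts_toSubgraph]
          simp only [Finset.coe_insert, Set.mem_insert_iff, Finset.coe_singleton,
            Set.mem_singleton_iff] at hs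
          simp [hW]
          tauto
        · intro a ha b hb _
          simp only [Set.mem_diff, Walk.mem_verts_toSubgraph, hW, Walk.support_cons,
            Walk.support_nil, List.mem_cons, List.not_mem_nil, or_false,
            List.mem_singleton, Finset.coe_insert, Set.mem_insert_iff,
            Finset.coe_singleton, Set.mem_singleton_iff, not_or] at ha hb
          have haw : a = w := by tauto
          have hbw : b = w := by tauto
          rw [haw, hbw]
      · -- consecutive with x ≥ 1, use w = 0 : walk x → z → w → y
        set w : Fin n := ⟨0, by omega⟩ with hwdef
        have hw0 : w.val = 0 := rfl
        have a1 : (pathGraph n)ᶜ.Adj x z := compAdj (by omega) (by omega) (by omega)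
        have a2 : (pathGraph n)ᶜ.Adj z w := compAdj (by omega) (by omega) (by omega)
        have a3 : (pathGraph n)ᶜ.Adj w y := compAdj (by omega) (by omega) (by omega)
        set W : (pathGraph n)ᶜ.Walk x y :=
          Walk.cons a1 (Walk.cons a2 (Walk.cons a3 Walk.nil)) with hW
        refine ⟨W.toSubgraph, W.toSubgraph_connected, ?_, ?_, fun v _ => Nat.one_pos⟩
        · intro s hs
          rw [Walk.mem_verts_toSubgraph]
          simp only [Finset.coe_insert, Set.mem_insert_iff, Finset.coe_singleton,
            Set.mem_singleton_iff] at hs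
          simp [hW]
          tauto
        · intro a ha b hb _
          simp only [Set.mem_diff, Walk.mem_verts_toSubgraph, hW, Walk.support_cons,
            Walk.support_nil, List.mem_cons, List.not_mem_nil, or_false,
            List.mem_singleton, Finset.coe_insert, Set.mem_insert_iff,
            Finset.coe_singleton, Set.mem_singleton_iff, not_or] at ha hb
          have haw : a = w := by tauto
          have hbw : b = w := by tauto
          rw [haw, hbw]
    · -- y = x+1, z ≥ y+2 : walk x → z → y
      have a1 : (pathGraph n)ᶜ.Adj x z := compAdj (by omega) (by omega) (by omega)
      have a2 : (pathGraph n)ᶜ.Adj z y := compAdj (by omega) (by omega) (by omega)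
      set W : (pathGraph n)ᶜ.Walk x y := Walk.cons a1 (Walk.cons a2 Walk.nil) with hW
      refine ⟨W.toSubgraph, W.toSubgraph_connected, ?_, ?_, fun v _ => Nat.one_pos⟩
      · intro s hs
        rw [Walk.mem_verts_toSubgraph]
        simp only [Finset.coe_insert, Set.mem_insert_iff, Finset.coe_singleton,
          Set.mem_singleton_iff] at hs
        simp [hW]
        tauto
      · intro a ha b hb _
        exfalso
        simp only [Set.mem_diff, Walk.mem_verts_toSubgraph, hW, Walk.support_cons,
          Walk.support_nil, List.mem_cons, List.not_mem_nil, or_false,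
          List.mem_singleton, Finset.coe_insert, Set.mem_insert_iff,
          Finset.coe_singleton, Set.mem_singleton_iff, not_or] at ha
        tauto
  · -- y ≥ x+2 : walk y → x → z
    have a1 : (pathGraph n)ᶜ.Adj y x := compAdj (by omega) (by omega) (by omega)
    have a2 : (pathGraph n)ᶜ.Adj x z := compAdj (by omega) (by omega) (by omega)
    set W : (pathGraph n)ᶜ.Walk y z := Walk.cons a1 (Walk.cons a2 Walk.nil) with hW
    refine ⟨W.toSubgraph, W.toSubgraph_connected, ?_, ?_, fun v _ => Nat.one_pos⟩
    · intro s hs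
      rw [Walk.mem_verts_toSubgraph]
      simp only [Finset.coe_insert, Set.mem_insert_iff, Finset.coe_singleton,
        Set.mem_singleton_iff] at hs
      simp [hW]
      tauto
    · intro a ha b hb _
      exfalso
      simp only [Set.mem_diff, Walk.mem_verts_toSubgraph, hW, Walk.support_cons,
        Walk.support_nil, List.mem_cons, List.not_mem_nil, or_false,
        List.mem_singleton, Finset.coe_insert, Set.mem_insert_iff,
        Finset.coe_singleton, Set.mem_singleton_iff, not_or] at ha
      tauto

lemma comp_not_zero {n : ℕ} (hn : 5 ≤ n) : ¬ hasRvxColoring (pathGraph n)ᶜ 3 0 := by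
  rintro ⟨c, hc⟩
  set v0 : Fin n := ⟨0, by omega⟩ with hv0
  set v1 : Fin n := ⟨1, by omega⟩ with hv1
  set v2 : Fin n := ⟨2, by omega⟩ with hv2
  have hcard : ({v0, v1, v2} : Finset (Fin n)).card = 3 := by
    rw [Finset.card_insert_of_notMem, Finset.card_insert_of_notMem, Finset.card_singleton]
    · simp only [Finset.mem_singleton]
      intro h; exact absurd (congrArg Fin.val h) (by simp [hv1, hv2])
    · simp only [Finset.mem_insert, Finset.mem_singleton]
      push_neg
      constructor <;> (intro h; exact absurd (congrArg Fin.val h) (by simp [hv0, hv1, hv2]))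
  obtain ⟨T, hTc, hTS, _, hlt⟩ := hc {v0, v1, v2} hcard
  have hverts : ∀ v ∈ T.verts, v = v0 ∨ v = v1 ∨ v = v2 := by
    intro v hv
    by_contra hns
    refine absurd (hlt v ⟨hv, ?_⟩) (by omega)
    simpa using hns
  have h1m : v1 ∈ T.verts := hTS (by simp)
  have h0m : v0 ∈ T.verts := hTS (by simp)
  obtain ⟨w⟩ := hTc ⟨v1, h1m⟩ ⟨v0, h0m⟩
  have hne : (⟨v1, h1m⟩ : T.verts) ≠ ⟨v0, h0m⟩ := by
    intro h
    have h2 : v1 = v0 := congrArg Subtype.val h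
    exact absurd (congrArg Fin.val h2) (by simp [hv0, hv1])
  obtain ⟨u, hadj, q, -⟩ := Walk.not_nil_iff.mp (Walk.not_nil_of_ne hne (p := w))
  rw [Subgraph.coe_adj] at hadj
  have hS := hverts _ u.2
  have hcomp := hadj.adj_sub
  rw [compl_adj, pathGraph_adj] at hcomp
  obtain ⟨hne', hnadj⟩ := hcomp
  have hne'' : (((⟨v1, h1m⟩ : T.verts) : Fin n)).val ≠ (u : Fin n).val :=
    fun h => hne' (Fin.ext h)
  have hval : (((⟨v1, h1m⟩ : T.verts) : Fin n)).val = 1 := rfl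
  rcases hS with h | h | h <;>
    (have := congrArg Fin.val h; simp [hv0, hv1, hv2] at this; omega)

/-- for the path `P_n` with `n ≥ 5`, `rvx_3(P_n) = n - 2`,
`rvx_3(complement of P_n) = 1`, and their sum is `n - 1`. -/
theorem rvx_three_path_complement (n : ℕ) (hn : 5 ≤ n) :
    rvx (SimpleGraph.pathGraph n) 3 = n - 2 ∧
    rvx (SimpleGraph.pathGraph n)ᶜ 3 = 1 ∧
    rvx (SimpleGraph.pathGraph n) 3 + rvx (SimpleGraph.pathGraph n)ᶜ 3 = n - 1 := by
  have h1 : rvx (SimpleGraph.pathGraph n) 3 = n - 2 :=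
    le_antisymm (Nat.sInf_le (path_upper hn))
      (le_csInf ⟨n - 2, path_upper hn⟩ fun m hm => path_lower hn hm)
  have h2 : rvx (SimpleGraph.pathGraph n)ᶜ 3 = 1 := by
    have hm1 : (1 : ℕ) ∈ {m | hasRvxColoring (SimpleGraph.pathGraph n)ᶜ 3 m} := comp_upper hn
    have hle : rvx (SimpleGraph.pathGraph n)ᶜ 3 ≤ 1 := Nat.sInf_le hm1
    have hmem := Nat.sInf_mem (⟨1, hm1⟩ :
      Set.Nonempty {m | hasRvxColoring (SimpleGraph.pathGraph n)ᶜ 3 m})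
    rcases Nat.lt_or_ge (rvx (SimpleGraph.pathGraph n)ᶜ 3) 1 with h | h
    · exact absurd (Nat.lt_one_iff.mp h ▸ hmem) (comp_not_zero hn)
    · exact le_antisymm hle h
  exact ⟨h1, h2, by rw [h1, h2]; omega⟩
end

section
/- For every integer k with 2 ≤ k ≤ n, t(n, k, n−2) = n − 1, where t(n,k,ℓ) denotes the minimal number of edges of a connected graph G of order n with rvx_k(G) ≤ ℓ. -/
open SimpleGraph

lemma pathWalk (n : ℕ) : ∀ (d : ℕ) (i j : Fin n), i.val + d = j.val →
    ∃ w : (pathGraph n).Walk i j, ∀ v, v ∈ w.support ↔ i ≤ v ∧ v ≤ j := by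
  intro d
  induction d with
  | zero =>
    intro i j h
    have hij : i = j := Fin.ext (by omega)
    subst hij
    exact ⟨.nil, fun v => by
      simp only [Walk.support_nil, List.mem_singleton, Fin.ext_iff, Fin.le_def]; omega⟩
  | succ d ih =>
    intro i j h
    have hj := j.isLt
    have hi1 : i.val + 1 < n := by omega
    obtain ⟨w, hw⟩ := ih ⟨i.val + 1, hi1⟩ j (by simp; omega)
    have hadj : (pathGraph n).Adj i ⟨i.val + 1, hi1⟩ := pathGraph_adj.mpr (Or.inl rfl)
    refine ⟨.cons hadj w, fun v => ?_⟩
    simp only [Walk.support_cons, List.mem_cons, hw, Fin.ext_iff, Fin.le_def]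
    omega

lemma pathGraph_edgeSet_eq (n : ℕ) :
    (pathGraph n).edgeSet =
      Set.range (fun i : Fin (n - 1) =>
        s((⟨i.val, by omega⟩ : Fin n), (⟨i.val + 1, by omega⟩ : Fin n))) := by
  ext e
  induction e using Sym2.ind with
  | _ u v =>
    simp only [mem_edgeSet, pathGraph_adj, Set.mem_range, Sym2.eq_iff, Fin.ext_iff]
    constructor
    · rintro (h | h)
      · exact ⟨⟨u.val, by have := v.isLt; omega⟩, Or.inl (by simp; omega)⟩
      · exact ⟨⟨v.val, by have := u.isLt; omega⟩, Or.inr (by simp; omega)⟩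
    · rintro ⟨i, (⟨h1, h2⟩ | ⟨h1, h2⟩)⟩ <;> omega

lemma pathGraph_edgeSet_ncard (n : ℕ) : (pathGraph n).edgeSet.ncard = n - 1 := by
  rw [pathGraph_edgeSet_eq, ← Set.image_univ,
    Set.ncard_image_of_injective _ (fun i j hij => ?_), Set.ncard_univ, Nat.card_eq_fintype_card,
    Fintype.card_fin]
  simp only [Sym2.eq_iff, Fin.ext_iff] at hij
  exact Fin.ext (by omega)

lemma connected_card_le {V : Type*} [Fintype V] {G : SimpleGraph V} (hG : G.Connected) :
    Fintype.card V ≤ G.edgeSet.ncard + 1 := by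
  classical
  obtain ⟨v0⟩ := hG.nonempty
  have key : ∀ w : V, w ≠ v0 → ∃ x, G.Adj w x ∧ G.dist x v0 < G.dist w v0 := by
    intro w hw
    obtain ⟨p, hp⟩ := exists_walk_of_dist_ne_zero (G := G) (hG.pos_dist_of_ne hw).ne'
    cases p with
    | nil => exact absurd rfl hw
    | @cons _ x _ h q =>
      refine ⟨x, h, ?_⟩
      have hq := dist_le q
      simp only [Walk.length_cons] at hp
      omega
  choose nb hnb hlt using key
  have hinj : Function.Injective
      (fun w : {w : V // w ≠ v0} => (⟨s(w.1, nb w.1 w.2), hnb w.1 w.2⟩ : G.edgeSet)) := by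
    rintro ⟨w, hw⟩ ⟨w', hw'⟩ h
    have h' := congrArg Subtype.val h
    simp only [Sym2.eq_iff] at h'
    rcases h' with ⟨h1, _⟩ | ⟨h1, h2⟩
    · exact Subtype.ext h1
    · exfalso
      have l1 := hlt w hw
      have l2 := hlt w' hw'
      rw [h2] at l1
      rw [← h1] at l2
      omega
  have hcard := Nat.card_le_card_of_injective _ hinj
  rw [Nat.card_coe_set_eq] at hcard
  have : Nat.card {w : V // w ≠ v0} = Fintype.card V - 1 := by
    rw [Nat.card_eq_fintype_card]
    have : Fintype.card {w : V // w ≠ v0} = Fintype.card V - Fintype.card {w : V // w = v0} :=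
      Fintype.card_subtype_compl _
    rw [this, Fintype.card_subtype_eq]
  rw [this] at hcard
  have : 0 < Fintype.card V := Fintype.card_pos_iff.mpr ⟨v0⟩
  omega

lemma rvx_pathGraph_le (n k : ℕ) (hk : 1 ≤ k) : rvx (pathGraph n) k ≤ n - 2 := by
  apply Nat.sInf_le
  refine ⟨fun v => v.val - 1, fun S hS => ?_⟩
  have hSne : S.Nonempty := by rw [← Finset.card_pos, hS]; omega
  set a := S.min' hSne with ha
  set b := S.max' hSne with hb
  have hab : a.val ≤ b.val := S.min'_le b (S.max'_mem hSne)
  obtain ⟨w, hw⟩ := pathWalk n (b.val - a.val) a b (by omega)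
  refine ⟨w.toSubgraph, w.toSubgraph_connected, ?_, ?_, ?_⟩
  · intro s hs
    rw [Walk.mem_verts_toSubgraph, hw]
    exact ⟨S.min'_le s hs, S.le_max' s hs⟩
  · intro x hx y hy hxy
    obtain ⟨hx1, hx2⟩ := hx
    obtain ⟨hy1, hy2⟩ := hy
    rw [Walk.mem_verts_toSubgraph, hw] at hx1 hy1
    have hxa : x ≠ a := fun h => hx2 (h ▸ S.min'_mem hSne)
    have hya : y ≠ a := fun h => hy2 (h ▸ S.min'_mem hSne)
    have h1 : a.val < x.val := lt_of_le_of_ne hx1.1 (fun h => hxa (Fin.ext h.symm))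
    have h2 : a.val < y.val := lt_of_le_of_ne hy1.1 (fun h => hya (Fin.ext h.symm))
    simp only at hxy
    exact Fin.ext (by omega)
  · intro v hv
    obtain ⟨hv1, hv2⟩ := hv
    rw [Walk.mem_verts_toSubgraph, hw] at hv1
    have hva : v ≠ a := fun h => hv2 (h ▸ S.min'_mem hSne)
    have hvb : v ≠ b := fun h => hv2 (h ▸ S.max'_mem hSne)
    have h1 : a.val < v.val := lt_of_le_of_ne hv1.1 (fun h => hva (Fin.ext h.symm))
    have h2 : v.val < b.val := lt_of_le_of_ne hv1.2 (fun h => hvb (Fin.ext h))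
    have := b.isLt
    simp only
    omega

/-- `t(n, k, n-2) = n - 1` for `2 ≤ k ≤ n`. -/
theorem minSize_ell_eq (n k : ℕ) (hk : 2 ≤ k) (hk' : k ≤ n) :
    minSize n k (n - 2) = n - 1 := by
  have hmem : n - 1 ∈ {m | ∃ G : SimpleGraph (Fin n), G.Connected ∧ rvx G k ≤ n - 2 ∧
      G.edgeSet.ncard = m} := by
    refine ⟨SimpleGraph.pathGraph n, ?_, rvx_pathGraph_le n k (by omega),
      pathGraph_edgeSet_ncard n⟩
    have : Nonempty (Fin n) := ⟨⟨0, by omega⟩⟩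
    exact ⟨SimpleGraph.pathGraph_preconnected n⟩
  refine le_antisymm (Nat.sInf_le hmem) (le_csInf ⟨_, hmem⟩ ?_)
  rintro m ⟨G, hc, -, rfl⟩
  have := connected_card_le hc
  rw [Fintype.card_fin] at this
  omega
end
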